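/- arXiv:1504.05482 — 2 statements merged into one kernel-verified Lean document; each statement's English description precedes it below -/
import Mathlib

section
/- For any positive integers n, k with n > k, the polynomial [2k+1]_q · [2k choose k]_q · ∑_{h=0}^{n-1} q^h [h choose k]_q^2 is divisible by [n]_q in ℤ[q]. -/
open Polynomial Finset

/-- The q-integer `[n]_q = 1 + q + ⋯ + q^{n-1}` as a polynomial in `ℤ[q]`. -/
noncomputable def qint (n : ℕ) : Polynomial ℤ := ∑ i ∈ Finset.range n, X ^ i

/-- The q-factorial `[n]_q! = [n]_q [n-1]_q ⋯ [1]_q`. -/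
noncomputable def qfact : ℕ → Polynomial ℤ
  | 0 => 1
  | n + 1 => qint (n + 1) * qfact n

/-- The Gaussian (q-)binomial coefficient `[n choose k]_q` as a polynomial in `ℤ[q]`,
defined by the q-Pascal recurrence; it equals `∏_{i=1}^k (1-q^{n-i+1})/(1-q^i)` for
`0 ≤ k ≤ n` and `0` otherwise. -/
noncomputable def qbinom : ℕ → ℕ → Polynomial ℤ
  | _, 0 => 1
  | 0, _ + 1 => 0
  | n + 1, k + 1 => qbinom n k + X ^ (k + 1) * qbinom n (k + 1)

lemma qbinom_zero_right (n : ℕ) : qbinom n 0 = 1 := by cases n <;> rfl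

lemma qbinom_succ_succ (n k : ℕ) :
    qbinom (n+1) (k+1) = qbinom n k + X ^ (k+1) * qbinom n (k+1) := rfl

lemma qbinom_eq_zero : ∀ {n k : ℕ}, n < k → qbinom n k = 0 := by
  intro n
  induction n with
  | zero => intro k h; match k, h with
    | k+1, _ => rfl
  | succ n ih =>
    intro k h
    match k, h with
    | k+1, h =>
      rw [qbinom_succ_succ, ih (by omega), ih (by omega), mul_zero, add_zero]

lemma qbinom_self : ∀ n : ℕ, qbinom n n = 1 := by
  intro n
  induction n with
  | zero => rfl
  | succ n ih => rw [qbinom_succ_succ, ih, qbinom_eq_zero (by omega), mul_zero, add_zero]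

lemma qint_succ (n : ℕ) : qint (n+1) = qint n + X ^ n := by
  rw [qint, qint, Finset.sum_range_succ]

lemma qint_succ' (n : ℕ) : qint (n+1) = 1 + X * qint n := by
  rw [qint, qint, Finset.sum_range_succ', Finset.mul_sum]
  simp [pow_succ, mul_comm, add_comm]

lemma qbinom_one (n : ℕ) : qbinom n 1 = qint n := by
  induction n with
  | zero => simp [qint]; rfl
  | succ n ih => rw [qbinom_succ_succ, qbinom_zero_right, ih, qint_succ', pow_one]

lemma qbinom_succ_succ' : ∀ n k : ℕ, qbinom (n+1) (k+1) = X ^ (n-k) * qbinom n k + qbinom n (k+1) := by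
  intro n
  induction n with
  | zero =>
    intro k
    cases k with
    | zero => simp [qbinom_self, qbinom_eq_zero]
    | succ k => simp [qbinom_eq_zero (by omega : (1:ℕ) < k+2), qbinom_eq_zero (by omega : (0:ℕ) < k+1),
        qbinom_eq_zero (by omega : (0:ℕ) < k+2)]
  | succ n ih =>
    intro k
    cases k with
    | zero =>
      rw [qbinom_succ_succ, qbinom_zero_right, qbinom_one]
      simp only [Nat.sub_zero, mul_one, pow_one]
      linear_combination qint_succ (n+1) - qint_succ' (n+1)
    | succ j =>
      rcases lt_trichotomy j n with hj | rfl | hj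
      · conv_lhs => rw [qbinom_succ_succ (n+1) (j+1)]
        conv_rhs => rw [qbinom_succ_succ n j, qbinom_succ_succ n (j+1)]
        rw [ih j, ih (j+1), Nat.succ_sub_succ]
        have hx : (X:ℤ[X]) ^ (j+1+1) * X ^ (n - (j+1)) = X ^ (n-j) * X ^ (j+1) := by
          rw [← pow_add, ← pow_add]; congr 1; omega
        linear_combination qbinom n (j+1) * hx
      · simp [qbinom_self, qbinom_eq_zero (by omega : j+1 < j+2)]
      · rw [qbinom_eq_zero (by omega : n+2 < j+2), qbinom_eq_zero (by omega : n+1 < j+1),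
          qbinom_eq_zero (by omega : n+1 < j+2)]
        simp

section
variable {d : ℕ} {ζ : ℂ}

lemma aeval_qbinom_succ_succ (n k : ℕ) :
    aeval ζ (qbinom (n+1) (k+1)) = aeval ζ (qbinom n k) + ζ^(k+1) * aeval ζ (qbinom n (k+1)) := by
  rw [qbinom_succ_succ, map_add, map_mul, map_pow, aeval_X]

lemma aeval_qbinom_succ_succ' (n k : ℕ) :
    aeval ζ (qbinom (n+1) (k+1)) = ζ^(n-k) * aeval ζ (qbinom n k) + aeval ζ (qbinom n (k+1)) := by
  rw [qbinom_succ_succ', map_add, map_mul, map_pow, aeval_X]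

lemma zeta_pow_mod (hζ : IsPrimitiveRoot ζ d) (m : ℕ) : ζ ^ m = ζ ^ (m % d) := by
  conv_lhs => rw [← Nat.div_add_mod m d]
  rw [pow_add, pow_mul, hζ.pow_eq_one, one_pow, one_mul]

lemma aeval_qbinom_d (hζ : IsPrimitiveRoot ζ d) (hd : 2 ≤ d) {e : ℕ}
    (he0 : 0 < e) (hed : e < d) : aeval ζ (qbinom d e) = 0 := by
  obtain ⟨e, rfl⟩ : ∃ e', e = e' + 1 := ⟨e - 1, by omega⟩
  obtain ⟨m, rfl⟩ : ∃ m, d = m + 1 := ⟨d - 1, by omega⟩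
  have h1 := aeval_qbinom_succ_succ (ζ := ζ) m e
  have h2 := aeval_qbinom_succ_succ' (ζ := ζ) m e
  have hz : ζ ^ (m+1) = 1 := hζ.pow_eq_one
  have hpow : ζ^(e+1) * ζ^(m - e) = ζ^(m+1) := by rw [← pow_add]; congr 1; omega
  have key : (1 - ζ^(e+1)) * aeval ζ (qbinom (m+1) (e+1)) = 0 := by
    linear_combination h1 - ζ^(e+1) * h2 - aeval ζ (qbinom m e) * (hpow.trans hz)
  rcases mul_eq_zero.mp key with h | h
  · exact absurd (sub_eq_zero.mp h).symm (hζ.pow_ne_one_of_pos_of_lt (by omega) (by omega))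
  · exact h

lemma succ_mod_div (d h : ℕ) (hd : 0 < d) :
    (h % d + 1 < d ∧ (h+1) % d = h % d + 1 ∧ (h+1)/d = h/d) ∨
    (h % d + 1 = d ∧ (h+1) % d = 0 ∧ (h+1)/d = h/d + 1) := by
  have hdm := Nat.div_add_mod h d
  have hlt : h % d < d := Nat.mod_lt _ hd
  rcases lt_or_eq_of_le (show h % d + 1 ≤ d by omega) with hc | hc
  · left
    refine ⟨hc, ?_, ?_⟩
    · have key : h + 1 = (h % d + 1) + d * (h / d) := by omega
      rw [key, Nat.add_mul_mod_self_left, Nat.mod_eq_of_lt hc]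
    · have key : h + 1 = (h % d + 1) + d * (h / d) := by omega
      rw [key, Nat.add_mul_div_left _ _ hd, Nat.div_eq_of_lt hc, zero_add]
  · right
    refine ⟨hc, ?_, ?_⟩
    · have key : h + 1 = d * (h / d + 1) := by
        have : d * (h / d + 1) = d * (h / d) + d := by ring
        omega
      rw [key, Nat.mul_mod_right]
    · have key : h + 1 = d * (h / d + 1) := by
        have : d * (h / d + 1) = d * (h / d) + d := by ring
        omega
      rw [key, Nat.mul_div_cancel_left _ hd]

lemma aeval_qbinom_lucas (hζ : IsPrimitiveRoot ζ d) (hd : 2 ≤ d) :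
    ∀ h k : ℕ, aeval ζ (qbinom h k)
      = (Nat.choose (h / d) (k / d) : ℂ) * aeval ζ (qbinom (h % d) (k % d)) := by
  have hd0 : 0 < d := by omega
  intro h
  induction h with
  | zero =>
    intro k
    cases k with
    | zero => simp [qbinom_zero_right]
    | succ k =>
      rcases Nat.eq_zero_or_pos ((k+1) % d) with h0 | hpos
      · have hdvd : d ∣ k + 1 := Nat.dvd_of_mod_eq_zero h0
        have hpos' : 0 < (k+1)/d := Nat.div_pos (Nat.le_of_dvd k.succ_pos hdvd) hd0
        rw [show qbinom 0 (k+1) = 0 from rfl, h0, Nat.zero_div, Nat.zero_mod,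
          Nat.choose_eq_zero_of_lt hpos']
        simp
      · obtain ⟨m, hm⟩ : ∃ m, (k+1) % d = m + 1 := ⟨(k+1) % d - 1, by omega⟩
        rw [show qbinom 0 (k+1) = 0 from rfl, hm, Nat.zero_mod, Nat.zero_div,
          show qbinom 0 (m+1) = 0 from rfl]
        simp
  | succ h ih =>
    intro k
    cases k with
    | zero => simp [qbinom_zero_right]
    | succ j =>
      rcases succ_mod_div d h hd0 with ⟨hb, hbm, hbd⟩ | ⟨hb, hbm, hbd⟩ <;>
        rcases succ_mod_div d j hd0 with ⟨hj, hjm, hjd⟩ | ⟨hj, hjm, hjd⟩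
      · -- b+1 < d, e+1 < d
        rw [hbm, hbd, hjm, hjd, aeval_qbinom_succ_succ, ih j, ih (j+1),
          aeval_qbinom_succ_succ, hjm, hjd]
        have hz : ζ ^ (j+1) = ζ ^ (j % d + 1) := by rw [zeta_pow_mod hζ (j+1), hjm]
        rw [hz]; ring
      · -- b+1 < d, e+1 = d
        rw [hbm, hbd, hjm, hjd, aeval_qbinom_succ_succ, ih j, ih (j+1),
          qbinom_zero_right, hjm, hjd]
        have hz : ζ ^ (j+1) = 1 := by rw [zeta_pow_mod hζ (j+1), hjm, pow_zero]
        have hzero : qbinom (h % d) (j % d) = 0 := qbinom_eq_zero (by omega)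
        rw [hz, hzero, qbinom_zero_right]
        simp
      · -- b+1 = d, e+1 < d
        rw [hbm, hbd, hjm, hjd, aeval_qbinom_succ_succ, ih j, ih (j+1), hjm, hjd]
        have hz : ζ ^ (j+1) = ζ ^ (j % d + 1) := by rw [zeta_pow_mod hζ (j+1), hjm]
        have hq : aeval ζ (qbinom (h % d) (j % d)) + ζ ^ (j % d + 1) * aeval ζ (qbinom (h % d) (j % d + 1))
            = aeval ζ (qbinom (h % d + 1) (j % d + 1)) := (aeval_qbinom_succ_succ _ _).symm
        rw [hz]
        have hzero : aeval ζ (qbinom (h % d + 1) (j % d + 1)) = 0 := by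
          rw [hb]; exact aeval_qbinom_d hζ hd (by omega) (by omega)
        rw [show qbinom 0 (j % d + 1) = 0 from rfl]
        simp only [map_zero, mul_zero]
        linear_combination ((h/d).choose (j/d) : ℂ) * (hq.trans hzero)
      · -- b+1 = d, e+1 = d
        rw [hbm, hbd, hjm, hjd, aeval_qbinom_succ_succ, ih j, ih (j+1),
          qbinom_zero_right, hjm, hjd]
        have hz : ζ ^ (j+1) = 1 := by rw [zeta_pow_mod hζ (j+1), hjm, pow_zero]
        have hbe : h % d = j % d := by omega
        rw [hz, hbe, qbinom_self, qbinom_zero_right, Nat.choose_succ_succ (h/d) (j/d)]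
        push_cast
        simp only [map_one]
        ring

lemma prod_formula (hζ : IsPrimitiveRoot ζ d) (hd : 0 < d) :
    ∀ b e : ℕ, (∏ j ∈ Finset.range e, (1 - ζ^(j+1))) * aeval ζ (qbinom b e)
      = ∏ i ∈ Finset.range e, (1 - ζ^b * (ζ⁻¹)^i) := by
  have hz0 : ζ ≠ 0 := hζ.ne_zero (by omega)
  have hinv : ζ * ζ⁻¹ = 1 := mul_inv_cancel₀ hz0
  intro b
  induction b with
  | zero =>
    intro e
    cases e with
    | zero => simp [qbinom_zero_right]
    | succ e =>
      rw [show qbinom 0 (e+1) = 0 from rfl]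
      simp only [map_zero, mul_zero]
      rw [Finset.prod_range_succ']
      simp
  | succ b ihb =>
    intro e
    cases e with
    | zero => simp [qbinom_zero_right]
    | succ e =>
      rw [Finset.prod_range_succ, aeval_qbinom_succ_succ]
      have h1 := ihb e
      have h2 := ihb (e+1)
      rw [Finset.prod_range_succ, Finset.prod_range_succ] at h2
      have h3 : ∏ i ∈ Finset.range (e+1), (1 - ζ^(b+1) * (ζ⁻¹)^i)
          = (1 - ζ^(b+1)) * ∏ i ∈ Finset.range e, (1 - ζ^b * (ζ⁻¹)^i) := by
        rw [Finset.prod_range_succ']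
        have hcong : ∀ i, 1 - ζ^(b+1) * (ζ⁻¹)^(i+1) = 1 - ζ^b * (ζ⁻¹)^i := by
          intro i
          have : ζ^(b+1) * (ζ⁻¹)^(i+1) = (ζ * ζ⁻¹) * (ζ^b * (ζ⁻¹)^i) := by ring
          rw [this, hinv, one_mul]
        rw [Finset.prod_congr rfl (fun i _ => hcong i)]
        simp [mul_comm]
      rw [h3]
      have hkey : ζ^(e+1) * (ζ^b * (ζ⁻¹)^e) = ζ^(b+1) := by
        have : ζ^(e+1) * (ζ^b * (ζ⁻¹)^e) = (ζ * ζ⁻¹)^e * ζ^(b+1) := by ring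
        rw [this, hinv, one_pow, one_mul]
      linear_combination (1-ζ^(e+1)) * h1 + ζ^(e+1) * h2
        - (∏ i ∈ Finset.range e, (1 - ζ^b * (ζ⁻¹)^i)) * hkey

lemma sum_small (hζ : IsPrimitiveRoot ζ d) (hd : 2 ≤ d) {e : ℕ} (he : 2*e+1 < d) :
    ∑ b ∈ Finset.range d, ζ^b * (aeval ζ (qbinom b e))^2 = 0 := by
  have hd0 : 0 < d := by omega
  set D : ℂ := ∏ j ∈ Finset.range e, (1 - ζ^(j+1)) with hD
  have hDne : D ≠ 0 := by
    rw [hD]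
    apply Finset.prod_ne_zero_iff.mpr
    intro j hj
    have hj' := Finset.mem_range.mp hj
    have : ζ^(j+1) ≠ 1 := hζ.pow_ne_one_of_pos_of_lt (by omega) (by omega)
    exact sub_ne_zero_of_ne (Ne.symm this)
  have hs : D^2 * ∑ b ∈ Finset.range d, ζ^b * (aeval ζ (qbinom b e))^2 = 0 := by
    rw [Finset.mul_sum]
    set P : Polynomial ℂ := ∏ i ∈ Finset.range e, (1 - Polynomial.C ((ζ⁻¹)^i) * Polynomial.X) with hP
    set g : Polynomial ℂ := Polynomial.X * P^2 with hg
    have hPdeg : P.natDegree ≤ e := by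
      calc P.natDegree ≤ ∑ i ∈ Finset.range e, (1 - Polynomial.C ((ζ⁻¹)^i) * Polynomial.X).natDegree :=
            Polynomial.natDegree_prod_le _ _
        _ ≤ ∑ _i ∈ Finset.range e, 1 := by
            apply Finset.sum_le_sum
            intro i _
            calc (1 - Polynomial.C ((ζ⁻¹)^i) * Polynomial.X).natDegree
                ≤ max (1 : Polynomial ℂ).natDegree (Polynomial.C ((ζ⁻¹)^i) * Polynomial.X).natDegree :=
                  Polynomial.natDegree_sub_le _ _
              _ ≤ 1 := by
                  simp only [Polynomial.natDegree_one, max_le_iff]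
                  exact ⟨Nat.zero_le _, (Polynomial.natDegree_C_mul_le _ _).trans (le_of_eq Polynomial.natDegree_X)⟩
        _ = e := by simp
    have hgdeg : g.natDegree < 2*e+2 := by
      have : g.natDegree ≤ Polynomial.X.natDegree + (P^2).natDegree := Polynomial.natDegree_mul_le
      have h2 : (P^2).natDegree ≤ 2 * P.natDegree := Polynomial.natDegree_pow_le
      have := Polynomial.natDegree_X (R := ℂ)
      omega
    have hev : ∀ b, D^2 * (ζ^b * (aeval ζ (qbinom b e))^2) = Polynomial.eval (ζ^b) g := by
      intro b
      have h1 := prod_formula hζ hd0 b e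
      have h2 : Polynomial.eval (ζ^b) P = ∏ i ∈ Finset.range e, (1 - ζ^b * (ζ⁻¹)^i) := by
        rw [hP, Polynomial.eval_prod]
        apply Finset.prod_congr rfl
        intro i _
        rw [Polynomial.eval_sub, Polynomial.eval_one, Polynomial.eval_mul, Polynomial.eval_C,
          Polynomial.eval_X, mul_comm]
      rw [hg, Polynomial.eval_mul, Polynomial.eval_pow, Polynomial.eval_X, h2, ← h1]
      ring
    rw [Finset.sum_congr rfl (fun b _ => hev b)]
    rw [Finset.sum_congr rfl (fun b _ => Polynomial.eval_eq_sum_range' hgdeg (ζ^b)), Finset.sum_comm]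
    apply Finset.sum_eq_zero
    intro m hm
    rcases Nat.eq_zero_or_pos m with rfl | hmpos
    · have : g.coeff 0 = 0 := by
        rw [hg, Polynomial.mul_coeff_zero, Polynomial.coeff_X_zero, zero_mul]
      exact Finset.sum_eq_zero (fun b _ => by rw [this, zero_mul])
    · have hmlt : m < d := by have := Finset.mem_range.mp hm; omega
      have hne1 : ζ^m ≠ 1 := hζ.pow_ne_one_of_pos_of_lt hmpos.ne' hmlt
      have hsum : ∑ b ∈ Finset.range d, (ζ^m)^b = 0 := by
        have hgeo := geom_sum_mul (ζ^m) d
        have hpow : (ζ^m)^d = 1 := by rw [← pow_mul, mul_comm, pow_mul, hζ.pow_eq_one, one_pow]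
        rw [hpow, sub_self] at hgeo
        exact (mul_eq_zero.mp hgeo).resolve_right (sub_ne_zero_of_ne hne1)
      calc ∑ b ∈ Finset.range d, g.coeff m * (ζ^b)^m
          = g.coeff m * ∑ b ∈ Finset.range d, (ζ^m)^b := by
            rw [Finset.mul_sum]
            apply Finset.sum_congr rfl
            intro b _
            rw [← pow_mul, ← pow_mul, mul_comm m b]
        _ = 0 := by rw [hsum, mul_zero]
  exact (mul_eq_zero.mp hs).resolve_left (pow_ne_zero _ hDne)

lemma aeval_qint (m : ℕ) : aeval ζ (qint m) = ∑ i ∈ Finset.range m, ζ ^ i := by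
  rw [qint, map_sum]
  apply Finset.sum_congr rfl
  intro i _
  rw [map_pow, aeval_X]

lemma aeval_qint_eq_zero (hζ : IsPrimitiveRoot ζ d) (hd : 2 ≤ d) {m : ℕ} (hm : d ∣ m) :
    aeval ζ (qint m) = 0 := by
  rw [aeval_qint]
  obtain ⟨c, rfl⟩ := hm
  have hz1 : ζ^(d*c) = 1 := by rw [pow_mul, hζ.pow_eq_one, one_pow]
  have hgeo := geom_sum_mul ζ (d*c)
  rw [hz1, sub_self] at hgeo
  exact (mul_eq_zero.mp hgeo).resolve_right
    (sub_ne_zero_of_ne (hζ.ne_one (by omega)))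

lemma sum_range_add' (f : ℕ → ℂ) (m n : ℕ) :
    ∑ i ∈ Finset.range (m+n), f i = (∑ i ∈ Finset.range m, f i) + ∑ i ∈ Finset.range n, f (m+i) := by
  induction n with
  | zero => simp
  | succ n ih =>
    rw [show m+(n+1) = (m+n)+1 from rfl, Finset.sum_range_succ, ih, Finset.sum_range_succ, add_assoc]

lemma sum_range_mul (f : ℕ → ℂ) (m e : ℕ) :
    ∑ h ∈ Finset.range (m*e), f h = ∑ a ∈ Finset.range m, ∑ b ∈ Finset.range e, f (a*e + b) := by
  induction m with
  | zero => simp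
  | succ m ih =>
    rw [show (m+1)*e = m*e + e by ring, sum_range_add', ih, Finset.sum_range_succ]

lemma aeval_big {n k : ℕ} (hk : 0 < k) (hkn : k < n) (hζ : IsPrimitiveRoot ζ d)
    (hd : 2 ≤ d) (hdn : d ∣ n) :
    aeval ζ (qint (2*k+1) * qbinom (2*k) k * ∑ h ∈ Finset.range n, X^h * (qbinom h k)^2) = 0 := by
  have hd0 : 0 < d := by omega
  have hed : k % d < d := Nat.mod_lt _ hd0
  have hkdm := Nat.div_add_mod k d
  rw [map_mul, map_mul]
  rcases lt_or_ge (2*(k % d)) d with h2e | h2e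
  · rcases eq_or_lt_of_le (show 2*(k % d)+1 ≤ d by omega) with heq | hlt
    · -- 2e+1 = d : qint (2k+1) vanishes
      have hdvd : d ∣ 2*k+1 := ⟨2*(k/d)+1, by
        have hexp : d*(2*(k/d)+1) = 2*(d*(k/d)) + d := by ring
        omega⟩
      rw [aeval_qint_eq_zero hζ hd hdvd, zero_mul, zero_mul]
    · -- 2e+1 < d : the sum vanishes
      have hsum : aeval ζ (∑ h ∈ Finset.range n, (X:Polynomial ℤ)^h * (qbinom h k)^2) = 0 := by
        rw [map_sum]
        have hterm : ∀ h, aeval ζ ((X:Polynomial ℤ)^h * (qbinom h k)^2)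
            = ζ^h * (aeval ζ (qbinom h k))^2 := by
          intro h
          rw [map_mul, map_pow, map_pow, aeval_X]
        rw [Finset.sum_congr rfl (fun h _ => hterm h)]
        obtain ⟨m, rfl⟩ := hdn
        rw [mul_comm d m, sum_range_mul]
        apply Finset.sum_eq_zero
        intro a _
        have hterm2 : ∀ b ∈ Finset.range d, ζ^(a*d+b) * (aeval ζ (qbinom (a*d+b) k))^2
            = ((Nat.choose a (k/d) : ℂ))^2 * (ζ^b * (aeval ζ (qbinom b (k % d)))^2) := by
          intro b hb
          have hblt := Finset.mem_range.mp hb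
          have hmod : (a*d+b) % d = b := by
            rw [add_comm, Nat.add_mul_mod_self_right, Nat.mod_eq_of_lt hblt]
          have hdiv : (a*d+b) / d = a := by
            rw [add_comm, Nat.add_mul_div_right _ _ hd0, Nat.div_eq_of_lt hblt, zero_add]
          rw [aeval_qbinom_lucas hζ hd (a*d+b) k, hmod, hdiv, zeta_pow_mod hζ (a*d+b), hmod]
          ring
        rw [Finset.sum_congr rfl hterm2, ← Finset.mul_sum, sum_small hζ hd hlt, mul_zero]
      rw [hsum, mul_zero]
  · -- 2e ≥ d : central binomial vanishes
    have h2k : aeval ζ (qbinom (2*k) k) = 0 := by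
      rw [aeval_qbinom_lucas hζ hd (2*k) k]
      have hmod : (2*k) % d = 2*(k % d) - d := by
        have h2 : 2*k = d*(2*(k/d)+1) + (2*(k % d) - d) := by
          have : d*(2*(k/d)+1) = 2*(d*(k/d)) + d := by ring
          omega
        rw [h2, Nat.mul_add_mod, Nat.mod_eq_of_lt (by omega)]
      rw [hmod, qbinom_eq_zero (show 2*(k % d) - d < k % d by omega), map_zero, mul_zero]
    rw [h2k, mul_zero, zero_mul]

/-- for `0 < k < n`, `[n]_q` divides
`[2k+1]_q [2k choose k]_q ∑_{h<n} q^h [h choose k]_q^2` in `ℤ[q]`. -/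
theorem stmt4 (n k : ℕ) (hk : 0 < k) (hkn : k < n) :
    qint n ∣ qint (2 * k + 1) * qbinom (2 * k) k *
        ∑ h ∈ Finset.range n, X ^ h * (qbinom h k) ^ 2 := by
  have hn0 : 0 < n := by omega
  set F := qint (2*k+1) * qbinom (2*k) k * ∑ h ∈ Finset.range n, X^h * (qbinom h k)^2 with hF
  have key : ∀ d ∈ n.divisors.erase 1, cyclotomic d ℤ ∣ F := by
    intro d hdmem
    obtain ⟨hd1, hdvz⟩ := Finset.mem_erase.mp hdmem
    have hdn : d ∣ n := (Nat.mem_divisors.mp hdvz).1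
    have hd0 : 0 < d := Nat.pos_of_mem_divisors hdvz
    have hd2 : 2 ≤ d := by omega
    have hζ : IsPrimitiveRoot (Complex.exp (2 * Real.pi * Complex.I / d)) d :=
      Complex.isPrimitiveRoot_exp d (by omega)
    have h0 : aeval (Complex.exp (2 * Real.pi * Complex.I / d)) F = 0 :=
      aeval_big hk hkn hζ hd2 hdn
    rw [cyclotomic_eq_minpoly hζ hd0]
    exact minpoly.isIntegrallyClosed_dvd (hζ.isIntegral hd0) h0
  have hprod : qint n = ∏ d ∈ n.divisors.erase 1, cyclotomic d ℤ := by
    rw [prod_cyclotomic_eq_geom_sum hn0 ℤ, qint]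
  have hmonic : (qint n).Monic := by
    rw [hprod]
    exact Polynomial.monic_prod_of_monic _ _ (fun d _ => Polynomial.cyclotomic.monic d ℤ)
  rw [← Polynomial.map_dvd_map (Int.castRingHom ℚ) Int.cast_injective hmonic]
  have hmapq : (qint n).map (Int.castRingHom ℚ) = ∏ d ∈ n.divisors.erase 1, cyclotomic d ℚ := by
    rw [hprod, Polynomial.map_prod]
    exact Finset.prod_congr rfl (fun d _ => Polynomial.map_cyclotomic_int d ℚ)
  rw [hmapq]
  apply Finset.prod_dvd_of_coprime
  · intro a ha b hb hab
    exact Polynomial.cyclotomic.isCoprime_rat hab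
  · intro d hdm
    rw [← Polynomial.map_cyclotomic_int d ℚ]
    exact Polynomial.map_dvd (Int.castRingHom ℚ) (key d hdm)
end
end

section
/- For nonnegative integers a, b and a prime p > max{a, b}, the integer ((a+b+1)!/(a!b!)) · ∑_{h=0}^{p-1} C(h,a) C(h,b) is congruent to (-1)^{a-b} p modulo p^2. -/
open Polynomial Finset

/-- Vandermonde in range form. -/
lemma my_vand (x y t : ℕ) :
    (x + y).choose t = ∑ i ∈ Finset.range (t + 1), x.choose i * y.choose (t - i) := by
  rw [Nat.add_choose_eq, Finset.Nat.sum_antidiagonal_eq_sum_range_succ_mk]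

/-- Hockey stick. -/
lemma my_hockey (m : ℕ) : ∀ n, ∑ h ∈ Finset.range n, h.choose m = n.choose (m + 1)
  | 0 => by simp
  | n + 1 => by
    rw [Finset.sum_range_succ, my_hockey m n, Nat.choose_succ_succ']
    omega

/-- Trinomial revision. -/
lemma my_chain (h a c : ℕ) (hah : a ≤ h) :
    h.choose a * (h - a).choose c = h.choose (a + c) * (a + c).choose a := by
  rcases le_or_gt (a + c) h with hch | hch
  · have := Nat.choose_mul (n := h) (Nat.le_add_right a c)
    simpa [Nat.add_sub_cancel_left] using this.symm
  · rw [Nat.choose_eq_zero_of_lt hch, Nat.choose_eq_zero_of_lt (by omega : h - a < c)]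
    ring

/-- Shifted Vandermonde. -/
lemma my_H (x b j : ℕ) :
    ∑ i ∈ Finset.range (x + 1), x.choose i * b.choose (j + i) = (x + b).choose (x + j) := by
  have h1 : (x + b).choose (x + j)
      = ∑ i ∈ Finset.range (x + j + 1), x.choose i * b.choose (x + j - i) := my_vand x b (x + j)
  have h2 : ∑ i ∈ Finset.range (x + j + 1), x.choose i * b.choose (x + j - i)
      = ∑ i ∈ Finset.range (x + 1), x.choose i * b.choose (x + j - i) := by
    refine (Finset.sum_subset (Finset.range_subset_range.mpr (by omega)) ?_).symm
    intro i _ hi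
    rw [Nat.choose_eq_zero_of_lt (by simpa using hi), zero_mul]
  rw [h1, h2]
  rw [← Finset.sum_range_reflect]
  refine Finset.sum_congr rfl ?_
  intro i hi
  simp only [Finset.mem_range] at hi
  have h3 : x + 1 - 1 - i = x - i := by omega
  rw [h3, Nat.choose_symm (by omega)]
  have h4 : j + (x - i) = x + j - i := by omega
  rw [h4]

/-- Inner-sum identity. -/
lemma my_G (a b j : ℕ) :
    ∑ k ∈ Finset.range (a + 1), a.choose k * b.choose k * k.choose j
      = a.choose j * (a + b - j).choose a := by
  rcases le_or_gt j a with hja | hja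
  · -- drop the terms with k < j
    have h1 : ∑ k ∈ Finset.range (a + 1), a.choose k * b.choose k * k.choose j
        = ∑ k ∈ Finset.Ico j (a + 1), a.choose k * b.choose k * k.choose j := by
      refine (Finset.sum_subset ?_ ?_).symm
      · intro k hk
        simp only [Finset.mem_Ico] at hk
        simp only [Finset.mem_range]
        omega
      · intro k hk hk'
        simp only [Finset.mem_range] at hk
        have hkj : k < j := by
          by_contra hc
          push_neg at hc
          exact hk' (Finset.mem_Ico.mpr ⟨hc, hk⟩)
        rw [Nat.choose_eq_zero_of_lt hkj, mul_zero]
    rw [h1, Finset.sum_Ico_eq_sum_range]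
    have h2 : a + 1 - j = (a - j) + 1 := by omega
    rw [h2]
    have h3 : ∀ i ∈ Finset.range ((a - j) + 1),
        a.choose (j + i) * b.choose (j + i) * (j + i).choose j
          = a.choose j * ((a - j).choose i * b.choose (j + i)) := by
      intro i hi
      simp only [Finset.mem_range] at hi
      have := Nat.choose_mul (n := a) (k := j + i) (s := j) (by omega)
      rw [Nat.add_sub_cancel_left] at this
      calc a.choose (j + i) * b.choose (j + i) * (j + i).choose j
          = a.choose (j + i) * (j + i).choose j * b.choose (j + i) := by ring
        _ = a.choose j * (a - j).choose i * b.choose (j + i) := by rw [this]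
        _ = a.choose j * ((a - j).choose i * b.choose (j + i)) := by ring
    rw [Finset.sum_congr rfl h3, ← Finset.mul_sum, my_H (a - j) b j]
    have e1 : a - j + b = a + b - j := by omega
    have e2 : a - j + j = a := by omega
    rw [e1, e2]
  · have h1 : ∀ k ∈ Finset.range (a + 1),
        a.choose k * b.choose k * k.choose j = 0 := by
      intro k hk
      simp only [Finset.mem_range] at hk
      rw [Nat.choose_eq_zero_of_lt (show k < j by omega), mul_zero]
    rw [Finset.sum_congr rfl h1, Finset.sum_const_zero,
      Nat.choose_eq_zero_of_lt hja, zero_mul]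

/-- Decomposition of a product of two binomial coefficients. -/
lemma my_dec2 (a b h : ℕ) :
    h.choose a * h.choose b
      = ∑ k ∈ Finset.range (a + 1),
          a.choose k * ((a + b - k).choose a * h.choose (a + b - k)) := by
  rcases le_or_gt a h with hah | hah
  · -- h ≥ a
    have hv : h.choose b = ∑ k ∈ Finset.range (b + 1), a.choose k * (h - a).choose (b - k) := by
      have := my_vand a (h - a) b
      rwa [Nat.add_sub_cancel' hah] at this
    rw [hv, Finset.mul_sum]
    have h1 : ∀ k ∈ Finset.range (b + 1),
        h.choose a * (a.choose k * (h - a).choose (b - k))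
          = a.choose k * ((a + b - k).choose a * h.choose (a + b - k)) := by
      intro k hk
      simp only [Finset.mem_range] at hk
      have hc := my_chain h a (b - k) hah
      have e1 : a + (b - k) = a + b - k := by omega
      rw [e1] at hc
      calc h.choose a * (a.choose k * (h - a).choose (b - k))
          = a.choose k * (h.choose a * (h - a).choose (b - k)) := by ring
        _ = a.choose k * (h.choose (a + b - k) * (a + b - k).choose a) := by rw [hc]
        _ = a.choose k * ((a + b - k).choose a * h.choose (a + b - k)) := by ring
    rw [Finset.sum_congr rfl h1]
    -- now both sums, over range (b+1) and range (a+1); extend both to range (a+b+1)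
    have hpad : ∀ n : ℕ, n ≤ a + b →
        (∀ k, n < k → k ≤ a + b → a.choose k * ((a + b - k).choose a * h.choose (a + b - k)) = 0) →
        ∑ k ∈ Finset.range (n + 1), a.choose k * ((a + b - k).choose a * h.choose (a + b - k))
          = ∑ k ∈ Finset.range (a + b + 1),
              a.choose k * ((a + b - k).choose a * h.choose (a + b - k)) := by
      intro n hn hz
      refine Finset.sum_subset (Finset.range_subset_range.mpr (by omega)) ?_
      intro k hk hk'
      simp only [Finset.mem_range] at hk hk'
      exact hz k (by omega) (by omega)
    rw [hpad b le_add_self (by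
        intro k hbk hkab
        rcases le_or_gt k a with hka | hka
        · rw [Nat.choose_eq_zero_of_lt (show a + b - k < a by omega), zero_mul, mul_zero]
        · rw [Nat.choose_eq_zero_of_lt hka, zero_mul]),
      hpad a le_self_add (by
        intro k hak hkab
        rw [Nat.choose_eq_zero_of_lt hak, zero_mul])]
  · -- h < a : both sides vanish
    rw [Nat.choose_eq_zero_of_lt hah, zero_mul]
    refine (Finset.sum_eq_zero ?_).symm
    intro k hk
    simp only [Finset.mem_range] at hk
    rcases le_or_gt k b with hkb | hkb
    · rw [Nat.choose_eq_zero_of_lt (show h < a + b - k by omega), mul_zero, mul_zero]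
    · rw [Nat.choose_eq_zero_of_lt (show a + b - k < a by omega), zero_mul, mul_zero]

/-- Transforming the summed decomposition. -/
lemma my_P1 (a b n : ℕ) :
    ∑ k ∈ Finset.range (a + 1), a.choose k * ((a + b - k).choose a * n.choose (a + b - k + 1))
      = ∑ k ∈ Finset.range (a + 1), a.choose k * b.choose k * (n + k).choose (a + b + 1) := by
  have h1 : ∀ k ∈ Finset.range (a + 1),
      a.choose k * b.choose k * (n + k).choose (a + b + 1)
        = ∑ j ∈ Finset.range (a + 1),
            a.choose k * b.choose k * k.choose j * n.choose (a + b + 1 - j) := by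
    intro k hk
    simp only [Finset.mem_range] at hk
    have hv : (k + n).choose (a + b + 1)
        = ∑ j ∈ Finset.range (a + b + 1 + 1), k.choose j * n.choose (a + b + 1 - j) :=
      my_vand k n (a + b + 1)
    have htr : ∑ j ∈ Finset.range (a + b + 1 + 1), k.choose j * n.choose (a + b + 1 - j)
        = ∑ j ∈ Finset.range (a + 1), k.choose j * n.choose (a + b + 1 - j) := by
      refine (Finset.sum_subset (Finset.range_subset_range.mpr (by omega)) ?_).symm
      intro j hj hj'
      simp only [Finset.mem_range] at hj hj'
      rw [Nat.choose_eq_zero_of_lt (show k < j by omega), zero_mul]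
    rw [show n + k = k + n from by omega, hv, htr, Finset.mul_sum]
    refine Finset.sum_congr rfl ?_
    intro j _
    ring
  rw [Finset.sum_congr rfl h1, Finset.sum_comm]
  refine Finset.sum_congr rfl ?_
  intro j hj
  simp only [Finset.mem_range] at hj
  have h2 : ∀ k ∈ Finset.range (a + 1),
      a.choose k * b.choose k * k.choose j * n.choose (a + b + 1 - j)
        = (a.choose k * b.choose k * k.choose j) * n.choose (a + b + 1 - j) := fun k _ => rfl
  rw [Finset.sum_congr rfl h2, ← Finset.sum_mul, my_G a b j]
  have e1 : a + b + 1 - j = a + b - j + 1 := by omega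
  rw [e1]
  ring

/-- KEY 1: the summed identity. -/
lemma my_key1 (a b n : ℕ) :
    ∑ h ∈ Finset.range n, h.choose a * h.choose b
      = ∑ k ∈ Finset.range (a + 1), a.choose k * b.choose k * (n + k).choose (a + b + 1) := by
  rw [← my_P1]
  calc ∑ h ∈ Finset.range n, h.choose a * h.choose b
      = ∑ h ∈ Finset.range n, ∑ k ∈ Finset.range (a + 1),
          a.choose k * ((a + b - k).choose a * h.choose (a + b - k)) :=
        Finset.sum_congr rfl fun h _ => my_dec2 a b h
    _ = ∑ k ∈ Finset.range (a + 1), ∑ h ∈ Finset.range n,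
          a.choose k * ((a + b - k).choose a * h.choose (a + b - k)) := Finset.sum_comm
    _ = ∑ k ∈ Finset.range (a + 1),
          a.choose k * ((a + b - k).choose a * n.choose (a + b - k + 1)) := by
        refine Finset.sum_congr rfl ?_
        intro k _
        rw [← Finset.mul_sum, ← Finset.mul_sum, my_hockey (a + b - k) n]

/-- Falling factorial as an integer product. -/
lemma my_key2a (n : ℕ) : ∀ r : ℕ,
    ((r.factorial * n.choose r : ℕ) : ℤ) = ∏ i ∈ Finset.range r, ((n : ℤ) - i)
  | 0 => by simp
  | r + 1 => by
    rw [Finset.prod_range_succ, ← my_key2a n r]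
    rcases le_or_gt (r + 1) n with h | h
    · have hc := Nat.choose_succ_right_eq n r
      have hcast : ((n - r : ℕ) : ℤ) = (n : ℤ) - r := by
        have : r ≤ n := by omega
        push_cast [this]
        ring
      calc (((r + 1).factorial * n.choose (r + 1) : ℕ) : ℤ)
          = ((r.factorial * (n.choose (r + 1) * (r + 1)) : ℕ) : ℤ) := by
            rw [Nat.factorial_succ]; push_cast; ring
        _ = ((r.factorial * (n.choose r * (n - r)) : ℕ) : ℤ) := by rw [hc]
        _ = ((r.factorial * n.choose r : ℕ) : ℤ) * ((n : ℤ) - r) := by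
            push_cast [hcast]; ring
    · rw [Nat.choose_eq_zero_of_lt h, Nat.mul_zero, Nat.cast_zero]
      rcases Nat.lt_succ_iff_lt_or_eq.mp h with h' | h'
      · rw [Nat.choose_eq_zero_of_lt h', Nat.mul_zero, Nat.cast_zero, zero_mul]
      · rw [h']
        simp

lemma my_prod_modeq {ι : Type*} (s : Finset ι) (f g : ι → ℤ) (n : ℤ)
    (h : ∀ i ∈ s, f i ≡ g i [ZMOD n]) : (∏ i ∈ s, f i) ≡ ∏ i ∈ s, g i [ZMOD n] := by
  classical
  induction s using Finset.induction_on with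
  | empty => simp
  | insert _ _ hx ih =>
    rw [Finset.prod_insert hx, Finset.prod_insert hx]
    exact (h _ (Finset.mem_insert_self _ _)).mul
      (ih fun i hi => h i (Finset.mem_insert_of_mem hi))

lemma my_sum_modeq {ι : Type*} (s : Finset ι) (f g : ι → ℤ) (n : ℤ)
    (h : ∀ i ∈ s, f i ≡ g i [ZMOD n]) : (∑ i ∈ s, f i) ≡ ∑ i ∈ s, g i [ZMOD n] := by
  classical
  induction s using Finset.induction_on with
  | empty => simp
  | insert _ _ hx ih =>
    rw [Finset.sum_insert hx, Finset.sum_insert hx]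
    exact (h _ (Finset.mem_insert_self _ _)).add
      (ih fun i hi => h i (Finset.mem_insert_of_mem hi))

/-- KEY 2: the per-term congruence mod p². -/
lemma my_key2 (p k m : ℕ) (hk : k ≤ m) (hkp : k < p) :
    (((m + 1).factorial : ℤ) * ((p + k).choose (m + 1) : ℤ))
      ≡ (p : ℤ) * ((-1) ^ (m - k) * (k.factorial * (m - k).factorial)) [ZMOD (p : ℤ) ^ 2] := by
  have hprod : (((m + 1).factorial : ℤ) * ((p + k).choose (m + 1) : ℤ))
      = ∏ i ∈ Finset.range (m + 1), (((p + k : ℕ) : ℤ) - i) := by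
    rw [← my_key2a (p + k) (m + 1)]
    push_cast
    ring
  rw [hprod]
  -- split the product at i = k
  have hsplit : ∏ i ∈ Finset.range (m + 1), (((p + k : ℕ) : ℤ) - i)
      = (∏ i ∈ Finset.range k, (((p + k : ℕ) : ℤ) - i)) * ((p : ℤ))
        * ∏ j ∈ Finset.range (m - k), (((p + k : ℕ) : ℤ) - (k + 1 + j)) := by
    rw [Finset.range_eq_Ico,
      ← Finset.prod_Ico_consecutive (fun i => (((p + k : ℕ) : ℤ) - i))
        (Nat.zero_le (k + 1)) (by omega : k + 1 ≤ m + 1),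
      ← Finset.range_eq_Ico, Finset.prod_range_succ,
      Finset.prod_Ico_eq_prod_range]
    have e1 : m + 1 - (k + 1) = m - k := by omega
    have e2 : (((p + k : ℕ) : ℤ) - k) = (p : ℤ) := by push_cast; ring
    rw [e1, e2]
    refine congrArg _ ?_
    refine Finset.prod_congr rfl ?_
    intro j _
    push_cast
    ring
  rw [hsplit]
  -- reduce the two side products mod p
  have hA : (∏ i ∈ Finset.range k, (((p + k : ℕ) : ℤ) - i))
      ≡ ∏ i ∈ Finset.range k, ((k : ℤ) - i) [ZMOD (p : ℤ)] := by
    refine my_prod_modeq _ _ _ _ ?_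
    intro i _
    have : (((p + k : ℕ) : ℤ) - i) - ((k : ℤ) - i) = (p : ℤ) := by push_cast; ring
    exact Int.ModEq.symm ((Int.modEq_iff_dvd).mpr (by rw [this]))
  have hB : (∏ j ∈ Finset.range (m - k), (((p + k : ℕ) : ℤ) - (k + 1 + j)))
      ≡ ∏ j ∈ Finset.range (m - k), (-(1 + (j : ℤ))) [ZMOD (p : ℤ)] := by
    refine my_prod_modeq _ _ _ _ ?_
    intro j _
    have : (-(1 + (j : ℤ))) - ((((p + k : ℕ) : ℤ) - (k + 1 + j))) = -(p : ℤ) := by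
      push_cast; ring
    exact (Int.modEq_iff_dvd).mpr (by rw [this]; exact dvd_neg.mpr dvd_rfl)
  have hAval : ∏ i ∈ Finset.range k, ((k : ℤ) - i) = (k.factorial : ℤ) := by
    rw [← my_key2a k k, Nat.choose_self, Nat.mul_one]
  have hBval : ∏ j ∈ Finset.range (m - k), (-(1 + (j : ℤ)))
      = (-1) ^ (m - k) * ((m - k).factorial : ℤ) := by
    calc ∏ j ∈ Finset.range (m - k), (-(1 + (j : ℤ)))
        = ∏ j ∈ Finset.range (m - k), ((-1) * ((j : ℤ) + 1)) := by
          refine Finset.prod_congr rfl ?_; intro j _; ring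
      _ = ((-1 : ℤ)) ^ (m - k) * ∏ j ∈ Finset.range (m - k), ((j : ℤ) + 1) := by
          rw [Finset.prod_mul_distrib, Finset.prod_const, Finset.card_range]
      _ = (-1) ^ (m - k) * ((m - k).factorial : ℤ) := by
          congr 1
          rw [← Finset.prod_range_add_one_eq_factorial (m - k)]
          push_cast
          rfl
  -- combine
  have hAB : ((∏ i ∈ Finset.range k, (((p + k : ℕ) : ℤ) - i))
        * ∏ j ∈ Finset.range (m - k), (((p + k : ℕ) : ℤ) - (k + 1 + j)))
      ≡ (k.factorial : ℤ) * ((-1) ^ (m - k) * ((m - k).factorial : ℤ)) [ZMOD (p : ℤ)] := by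
    rw [← hAval, ← hBval]
    exact hA.mul hB
  have hmul : ∀ x y : ℤ, x ≡ y [ZMOD (p : ℤ)] → (p : ℤ) * x ≡ (p : ℤ) * y [ZMOD (p : ℤ) ^ 2] := by
    intro x y hxy
    have hd : (p : ℤ) ∣ y - x := (Int.modEq_iff_dvd).mp hxy
    refine (Int.modEq_iff_dvd).mpr ?_
    have : (p : ℤ) * y - (p : ℤ) * x = (p : ℤ) * (y - x) := by ring
    rw [this, sq]
    exact mul_dvd_mul_left _ hd
  have := hmul _ _ hAB
  calc (∏ i ∈ Finset.range k, (((p + k : ℕ) : ℤ) - i)) * (p : ℤ)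
        * ∏ j ∈ Finset.range (m - k), (((p + k : ℕ) : ℤ) - (k + 1 + j))
      = (p : ℤ) * ((∏ i ∈ Finset.range k, (((p + k : ℕ) : ℤ) - i))
          * ∏ j ∈ Finset.range (m - k), (((p + k : ℕ) : ℤ) - (k + 1 + j))) := by ring
    _ ≡ (p : ℤ) * ((k.factorial : ℤ) * ((-1) ^ (m - k) * ((m - k).factorial : ℤ)))
          [ZMOD (p : ℤ) ^ 2] := this
    _ = (p : ℤ) * ((-1) ^ (m - k) * (k.factorial * (m - k).factorial)) := by ring

/-- KEY 3: factorial rearrangement. -/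
lemma my_key3 (a b k : ℕ) (hka : k ≤ a) :
    a.choose k * b.choose k * (k.factorial * (a + b - k).factorial)
      = a.factorial * b.factorial * (a.choose k * (a + b - k).choose a) := by
  rcases le_or_gt k b with hkb | hkb
  · apply Nat.eq_of_mul_eq_mul_right (Nat.factorial_pos (b - k))
    have h1 : b.choose k * k.factorial * (b - k).factorial = b.factorial :=
      Nat.choose_mul_factorial_mul_factorial hkb
    have h2 : (a + b - k).choose a * a.factorial * (b - k).factorial
        = (a + b - k).factorial := by
      have := Nat.choose_mul_factorial_mul_factorial (show a ≤ a + b - k by omega)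
      rwa [show a + b - k - a = b - k by omega] at this
    calc a.choose k * b.choose k * (k.factorial * (a + b - k).factorial) * (b - k).factorial
        = a.choose k * (a + b - k).factorial
            * (b.choose k * k.factorial * (b - k).factorial) := by ring
      _ = a.choose k * (a + b - k).factorial * b.factorial := by rw [h1]
      _ = b.factorial * a.choose k
            * ((a + b - k).choose a * a.factorial * (b - k).factorial) := by rw [h2]; ring
      _ = a.factorial * b.factorial * (a.choose k * (a + b - k).choose a)
            * (b - k).factorial := by ring
  · rw [Nat.choose_eq_zero_of_lt hkb,
      Nat.choose_eq_zero_of_lt (show a + b - k < a by omega)]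
    ring

/-- Alternating difference identity. -/
lemma my_L (a : ℕ) : ∀ b c : ℕ, a ≤ c →
    ∑ k ∈ Finset.range (a + 1),
        (-1 : ℤ) ^ k * (a.choose k : ℤ) * ((a + b - k).choose c : ℤ)
      = (b.choose (c - a) : ℤ) := by
  induction a with
  | zero => intro b c _; simp
  | succ a ih =>
    intro b c hc
    have hac : a ≤ c := by omega
    have ih1 := ih b c hac
    have ih2 := ih (b + 1) c hac
    -- derive the value of T := ∑ k ∈ range (a+1), (-1)^k C(a,k+1) C(a+b-k,c)
    have hT : ∑ k ∈ Finset.range (a + 1),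
          (-1 : ℤ) ^ k * (a.choose (k + 1) : ℤ) * ((a + b - k).choose c : ℤ)
        = ((a + b + 1).choose c : ℤ) - ((b + 1).choose (c - a) : ℤ) := by
      have hext : ∑ k ∈ Finset.range (a + 2),
            (-1 : ℤ) ^ k * (a.choose k : ℤ) * ((a + (b + 1) - k).choose c : ℤ)
          = ((b + 1).choose (c - a) : ℤ) := by
        rw [Finset.sum_range_succ, Nat.choose_succ_self, Nat.cast_zero, mul_zero, zero_mul,
          add_zero, ih2]
      rw [Finset.sum_range_succ' _ (a + 1)] at hext
      -- hext : ∑ k ∈ range (a+1), f (k+1) + f 0 = C(b+1, c-a)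
      have hf0 : (-1 : ℤ) ^ 0 * (a.choose 0 : ℤ) * ((a + (b + 1) - 0).choose c : ℤ)
          = ((a + b + 1).choose c : ℤ) := by
        simp [show a + (b + 1) = a + b + 1 from by omega]
      rw [hf0] at hext
      have hterm : ∀ k ∈ Finset.range (a + 1),
          (-1 : ℤ) ^ (k + 1) * (a.choose (k + 1) : ℤ) * ((a + (b + 1) - (k + 1)).choose c : ℤ)
            = -((-1 : ℤ) ^ k * (a.choose (k + 1) : ℤ) * ((a + b - k).choose c : ℤ)) := by
        intro k hk
        rw [show a + (b + 1) - (k + 1) = a + b - k from by omega, pow_succ]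
        ring
      rw [Finset.sum_congr rfl hterm, Finset.sum_neg_distrib] at hext
      linarith
    -- main computation
    rw [Finset.sum_range_succ' _ (a + 1)]
    have hterm : ∀ k ∈ Finset.range (a + 1),
        (-1 : ℤ) ^ (k + 1) * ((a + 1).choose (k + 1) : ℤ) * ((a + 1 + b - (k + 1)).choose c : ℤ)
          = -((-1 : ℤ) ^ k * (a.choose k : ℤ) * ((a + b - k).choose c : ℤ))
            + -((-1 : ℤ) ^ k * (a.choose (k + 1) : ℤ) * ((a + b - k).choose c : ℤ)) := by
      intro k hk
      rw [show a + 1 + b - (k + 1) = a + b - k from by omega, Nat.choose_succ_succ, pow_succ]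
      push_cast
      ring
    rw [Finset.sum_congr rfl hterm, Finset.sum_add_distrib, Finset.sum_neg_distrib,
      Finset.sum_neg_distrib, ih1, hT]
    have hf0 : (-1 : ℤ) ^ 0 * ((a + 1).choose 0 : ℤ) * ((a + 1 + b - 0).choose c : ℤ)
        = ((a + b + 1).choose c : ℤ) := by
      simp [show a + 1 + b = a + b + 1 from by omega]
    rw [hf0]
    -- Pascal on C(b+1, c-a)
    have hpas : (b + 1).choose (c - a) = b.choose (c - a - 1) + b.choose (c - a) := by
      have e : c - a = (c - a - 1) + 1 := by omega
      rw [e, Nat.choose_succ_succ]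
      simp
    have e2 : c - (a + 1) = c - a - 1 := by omega
    rw [e2, hpas]
    push_cast
    ring

/-- for a prime `p > max{a,b}`,
`((a+b+1)!/(a!b!)) ∑_{h<p} C(h,a) C(h,b) ≡ (-1)^{a-b} p (mod p^2)`. -/
theorem stmt7 (a b p : ℕ) (hp : p.Prime) (ha : a < p) (hb : b < p) :
    (((a + b + 1).factorial / (a.factorial * b.factorial) : ℕ) *
        ∑ h ∈ Finset.range p, (h.choose a * h.choose b : ℤ)) ≡
      (-1) ^ (a + b) * p [ZMOD (p : ℤ) ^ 2] := by
  have hfab : (a + b).choose a * a.factorial * b.factorial = (a + b).factorial := by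
    have := Nat.choose_mul_factorial_mul_factorial (Nat.le_add_right a b)
    rwa [Nat.add_sub_cancel_left] at this
  have hM : (a + b + 1).factorial / (a.factorial * b.factorial)
      = (a + b + 1) * (a + b).choose a := by
    rw [Nat.factorial_succ, ← hfab,
      show (a + b + 1) * ((a + b).choose a * a.factorial * b.factorial)
        = ((a + b + 1) * (a + b).choose a) * (a.factorial * b.factorial) from by ring]
    exact Nat.mul_div_cancel _ (Nat.mul_pos (Nat.factorial_pos a) (Nat.factorial_pos b))
  have hS : (∑ h ∈ Finset.range p, (h.choose a * h.choose b : ℤ))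
      = ∑ k ∈ Finset.range (a + 1),
          (a.choose k : ℤ) * (b.choose k : ℤ) * ((p + k).choose (a + b + 1) : ℤ) := by
    have := congrArg (Nat.cast : ℕ → ℤ) (my_key1 a b p)
    push_cast at this
    convert this using 1
  set c : ℤ := (a.factorial : ℤ) * (b.factorial : ℤ) with hc
  have hp2 : (0 : ℤ) < (p : ℤ) ^ 2 := by
    have := hp.pos
    positivity
  have hcop : Int.gcd ((p : ℤ) ^ 2) c = 1 := by
    have e : ((p : ℤ) ^ 2) = ((p ^ 2 : ℕ) : ℤ) := by push_cast; ring
    have e2 : c = ((a.factorial * b.factorial : ℕ) : ℤ) := by push_cast [hc]; ring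
    rw [e, e2, Int.gcd_natCast_natCast]
    have h1 : Nat.Coprime p (a.factorial) := (Nat.Prime.coprime_iff_not_dvd hp).mpr
      (fun hd => by have := (Nat.Prime.dvd_factorial hp).mp hd; omega)
    have h2 : Nat.Coprime p (b.factorial) := (Nat.Prime.coprime_iff_not_dvd hp).mpr
      (fun hd => by have := (Nat.Prime.dvd_factorial hp).mp hd; omega)
    exact Nat.Coprime.pow_left 2 (Nat.Coprime.mul_right h1 h2)
  have hcM : c * (((a + b + 1) * (a + b).choose a : ℕ) : ℤ) = ((a + b + 1).factorial : ℤ) := by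
    have : (a.factorial * b.factorial) * ((a + b + 1) * (a + b).choose a)
        = (a + b + 1).factorial := by
      rw [Nat.factorial_succ, ← hfab]; ring
    push_cast [← this, hc]
    ring
  have hmain : c * ((((a + b + 1) * (a + b).choose a : ℕ) : ℤ) *
        ∑ h ∈ Finset.range p, (h.choose a * h.choose b : ℤ))
      ≡ c * ((-1) ^ (a + b) * p) [ZMOD (p : ℤ) ^ 2] := by
    have step1 : c * ((((a + b + 1) * (a + b).choose a : ℕ) : ℤ) *
          ∑ h ∈ Finset.range p, (h.choose a * h.choose b : ℤ))
        = ∑ k ∈ Finset.range (a + 1),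
            ((a + b + 1).factorial : ℤ) * ((p + k).choose (a + b + 1) : ℤ)
              * ((a.choose k : ℤ) * (b.choose k : ℤ)) := by
      rw [hS, ← mul_assoc, hcM, Finset.mul_sum]
      refine Finset.sum_congr rfl ?_
      intro k _
      ring
    have step2 : (∑ k ∈ Finset.range (a + 1),
            ((a + b + 1).factorial : ℤ) * ((p + k).choose (a + b + 1) : ℤ)
              * ((a.choose k : ℤ) * (b.choose k : ℤ)))
        ≡ ∑ k ∈ Finset.range (a + 1),
            (p : ℤ) * ((-1) ^ (a + b - k) * ((k.factorial : ℤ) * ((a + b - k).factorial : ℤ)))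
              * ((a.choose k : ℤ) * (b.choose k : ℤ)) [ZMOD (p : ℤ) ^ 2] := by
      refine my_sum_modeq _ _ _ _ ?_
      intro k hk
      simp only [Finset.mem_range] at hk
      exact (my_key2 p k (a + b) (by omega) (by omega)).mul_right _
    have step3 : (∑ k ∈ Finset.range (a + 1),
            (p : ℤ) * ((-1) ^ (a + b - k) * ((k.factorial : ℤ) * ((a + b - k).factorial : ℤ)))
              * ((a.choose k : ℤ) * (b.choose k : ℤ)))
        = c * ((-1) ^ (a + b) * p) := by
      have e3 : ∀ k ∈ Finset.range (a + 1),
          (p : ℤ) * ((-1) ^ (a + b - k) * ((k.factorial : ℤ) * ((a + b - k).factorial : ℤ)))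
              * ((a.choose k : ℤ) * (b.choose k : ℤ))
            = ((p : ℤ) * (-1) ^ (a + b) * c)
                * ((-1) ^ k * (a.choose k : ℤ) * (((a + b - k).choose a : ℤ))) := by
        intro k hk
        simp only [Finset.mem_range] at hk
        have h3 := my_key3 a b k (by omega)
        have h3' : (a.choose k : ℤ) * (b.choose k : ℤ)
              * ((k.factorial : ℤ) * ((a + b - k).factorial : ℤ))
            = (a.factorial : ℤ) * (b.factorial : ℤ)
              * ((a.choose k : ℤ) * ((a + b - k).choose a : ℤ)) := by
          exact_mod_cast congrArg (Nat.cast : ℕ → ℤ) h3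
        have h5 : ((-1 : ℤ)) ^ k * (-1) ^ k = 1 := by
          rw [← pow_add, ← two_mul, pow_mul]; norm_num
        have h4 : ((-1 : ℤ)) ^ (a + b - k) * (-1) ^ k = (-1) ^ (a + b) := by
          rw [← pow_add]; congr 1; omega
        have hsgn : ((-1 : ℤ)) ^ (a + b - k) = (-1) ^ (a + b) * (-1) ^ k := by
          calc ((-1 : ℤ)) ^ (a + b - k)
              = (-1) ^ (a + b - k) * ((-1) ^ k * (-1) ^ k) := by rw [h5, mul_one]
            _ = ((-1) ^ (a + b - k) * (-1) ^ k) * (-1) ^ k := by ring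
            _ = (-1) ^ (a + b) * (-1) ^ k := by rw [h4]
        rw [hsgn, hc]
        linear_combination ((p : ℤ) * ((-1 : ℤ) ^ (a + b) * (-1 : ℤ) ^ k)) * h3'
      rw [Finset.sum_congr rfl e3, ← Finset.mul_sum, my_L a b a le_rfl]
      simp
      ring
    calc c * ((((a + b + 1) * (a + b).choose a : ℕ) : ℤ) *
          ∑ h ∈ Finset.range p, (h.choose a * h.choose b : ℤ))
        = ∑ k ∈ Finset.range (a + 1),
            ((a + b + 1).factorial : ℤ) * ((p + k).choose (a + b + 1) : ℤ)
              * ((a.choose k : ℤ) * (b.choose k : ℤ)) := step1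
      _ ≡ ∑ k ∈ Finset.range (a + 1),
            (p : ℤ) * ((-1) ^ (a + b - k) * ((k.factorial : ℤ) * ((a + b - k).factorial : ℤ)))
              * ((a.choose k : ℤ) * (b.choose k : ℤ)) [ZMOD (p : ℤ) ^ 2] := step2
      _ = c * ((-1) ^ (a + b) * p) := step3
  have hfin := Int.ModEq.cancel_left_div_gcd hp2 hmain
  rw [hcop] at hfin
  simpa [hM] using hfin
end
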